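/- Let x, y be binary sequences with |x| = |y| + 2 = m + 2 and y ∉ D_2(x), where m ≥ 5. Then |D_4(x) ∩ D_2(y)| ≤ 4m − 13. -/
import Mathlib


/-- The `t`-deletion ball of a binary sequence `x`: all subsequences of `x`
of length `|x| - t` (i.e., obtained by deleting exactly `t` symbols). -/
def delBall (t : ℕ) (x : List Bool) : Set (List Bool) :=
  {z | z.Sublist x ∧ z.length + t = x.length}

/-- Levenshtein (deletion) distance between binary sequences. -/
noncomputable def levDist (x y : List Bool) : ℕ :=
  sInf {r | ((delBall r x) ∩ (delBall r y)).Nonempty}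

/-- The alternating binary sequence of length `n` starting with `1` (= `true`). -/
def altSeq (n : ℕ) : List Bool :=
  (List.range n).map (fun k => decide (k % 2 = 0))

/-- Bitwise complement of a binary sequence. -/
def compl' (x : List Bool) : List Bool := x.map (fun b => !b)

/-- Elementwise concatenation of sets of sequences. -/
def setConcat (A B : Set (List Bool)) : Set (List Bool) :=
  Set.image2 (· ++ ·) A B


namespace S11

local infixl:50 " <+ " => List.Sublist

def CS1 (x y : List Bool) : Set (List Bool) :=
  {z | z.Sublist x ∧ z.Sublist y ∧ z.length + 1 = y.length}

def CS2 (x y : List Bool) : Set (List Bool) :=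
  {z | z.Sublist x ∧ z.Sublist y ∧ z.length + 2 = y.length}

lemma finite_sublists (x : List Bool) : {z : List Bool | z.Sublist x}.Finite := by
  apply Set.Finite.ofFinset x.sublists.toFinset
  simp [List.mem_sublists]

lemma CS1_finite (x y : List Bool) : (CS1 x y).Finite :=
  (finite_sublists x).subset (fun _ hz => hz.1)

lemma CS2_finite (x y : List Bool) : (CS2 x y).Finite :=
  (finite_sublists x).subset (fun _ hz => hz.1)

lemma sublist_of_ne_head {z x : List Bool} {c : Bool} (h : z <+ (c :: x))
    (hh : z.head? ≠ some c) : z <+ x := by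
  rcases List.sublist_cons_iff.mp h with h' | ⟨r, rfl, hr⟩
  · exact h'
  · exact absurd rfl hh

lemma exists_eraseIdx : ∀ (w z : List Bool), z <+ w → z.length + 1 = w.length →
    ∃ i ∈ Finset.range w.length, z = w.eraseIdx i := by
  intro w
  induction w with
  | nil => intro z h hl; simp at hl
  | cons d w' ih =>
    intro z h hl
    rcases List.sublist_cons_iff.mp h with h' | ⟨r, rfl, hr⟩
    · refine ⟨0, by simp, ?_⟩
      simp only [List.eraseIdx_cons_zero]
      exact h'.eq_of_length_le (by simp at hl ⊢; omega)
    · simp only [List.length_cons, Nat.add_right_cancel_iff] at hl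
      obtain ⟨i, hi, hz⟩ := ih r hr hl
      refine ⟨i + 1, by simp at hi ⊢; omega, ?_⟩
      simp [List.eraseIdx_cons_succ, ← hz]

lemma ncard_D1 (w : List Bool) :
    {z : List Bool | z.Sublist w ∧ z.length + 1 = w.length}.ncard ≤ w.length := by
  have hsub : {z : List Bool | z.Sublist w ∧ z.length + 1 = w.length}
      ⊆ ↑((Finset.range w.length).image (w.eraseIdx ·)) := by
    intro z hz
    obtain ⟨i, hi, hzi⟩ := exists_eraseIdx w z hz.1 hz.2
    simp only [Finset.coe_image, Set.mem_image, Finset.mem_coe]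
    exact ⟨i, hi, hzi.symm⟩
  calc {z : List Bool | z.Sublist w ∧ z.length + 1 = w.length}.ncard
      ≤ (↑((Finset.range w.length).image (w.eraseIdx ·)) : Set (List Bool)).ncard :=
        Set.ncard_le_ncard hsub (Finset.finite_toSet _)
    _ = ((Finset.range w.length).image (w.eraseIdx ·)).card := Set.ncard_coe_finset _
    _ ≤ (Finset.range w.length).card := Finset.card_image_le
    _ = w.length := Finset.card_range _

lemma ncard_split (S : Set (List Bool)) (hS : S.Finite) (b : Bool) :
    S.ncard ≤ {z ∈ S | z.head? = some b}.ncard + {z ∈ S | z.head? ≠ some b}.ncard := by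
  have hU : S ⊆ {z ∈ S | z.head? = some b} ∪ {z ∈ S | z.head? ≠ some b} := by
    intro z hz; by_cases h : z.head? = some b
    · exact Or.inl ⟨hz, h⟩
    · exact Or.inr ⟨hz, h⟩
  exact le_trans (Set.ncard_le_ncard hU ((hS.subset (fun _ h => h.1)).union
    (hS.subset (fun _ h => h.1)))) (Set.ncard_union_le _ _)

lemma ncard_cons_image (b : Bool) (S : Set (List Bool)) : ((b :: ·) '' S).ncard = S.ncard :=
  Set.ncard_image_of_injective _ (fun a₁ a₂ h => by simpa using h)

lemma headb_CS2 (b : Bool) (x y : List Bool) :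
    {z ∈ CS2 (b :: x) (b :: y) | z.head? = some b} = (b :: ·) '' CS2 x y := by
  ext z
  constructor
  · rintro ⟨⟨h1, h2, h3⟩, hh⟩
    cases z with
    | nil => simp at hh
    | cons a z' =>
      simp only [List.head?_cons, Option.some.injEq] at hh
      subst hh
      exact ⟨z', ⟨List.cons_sublist_cons.mp h1, List.cons_sublist_cons.mp h2,
        by simpa using h3⟩, rfl⟩
  · rintro ⟨z', ⟨h1, h2, h3⟩, rfl⟩
    exact ⟨⟨List.cons_sublist_cons.mpr h1, List.cons_sublist_cons.mpr h2,
      by simpa using h3⟩, rfl⟩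


lemma ncard_le_one_of_subset_singleton {S : Set (List Bool)} {w : List Bool}
    (h : S ⊆ {w}) : S.ncard ≤ 1 := by
  calc S.ncard ≤ ({w} : Set (List Bool)).ncard :=
      Set.ncard_le_ncard h (Set.finite_singleton w)
    _ = 1 := Set.ncard_singleton w

/-- The L-lemma: if `y` is not a subsequence of `x`, the number of common
subsequences of length `|y| - 1` is at most `|x| + 2 - |y|`. -/
lemma L_lemma : ∀ (x y : List Bool), ¬ y.Sublist x →
    (CS1 x y).ncard ≤ x.length + 2 - y.length := by
  intro x
  induction x with
  | nil =>
    intro y hyx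
    rcases y with _ | ⟨b, y'⟩
    · exact absurd (List.nil_sublist []) hyx
    rcases y' with _ | ⟨b', y''⟩
    · -- y = [b], bound = 1
      exact ncard_le_one_of_subset_singleton (w := [])
        (fun z hz => by simp [List.sublist_nil.mp hz.1])
    · -- |y| ≥ 2 : empty
      have : CS1 [] (b :: b' :: y'') = ∅ := by
        ext z
        simp only [CS1, Set.mem_setOf_eq, Set.mem_empty_iff_false, iff_false]
        rintro ⟨h1, _, h3⟩
        have := List.sublist_nil.mp h1
        subst this
        simp at h3
      rw [this]; simp
  | cons c x' ih =>
    intro y hyx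
    rcases y with _ | ⟨b, y'⟩
    · -- y = [] : contradiction
      exact absurd (List.nil_sublist _) hyx
    by_cases hlen : (c :: x').length + 2 ≤ (b :: y').length
    · -- set is empty by lengths
      have : CS1 (c :: x') (b :: y') = ∅ := by
        ext z
        simp only [CS1, Set.mem_setOf_eq, Set.mem_empty_iff_false, iff_false]
        rintro ⟨h1, _, h3⟩
        have := h1.length_le
        omega
      rw [this]; simp
    push_neg at hlen
    by_cases hcb : c = b
    · subst hcb
      -- split by head
      have hsplit := ncard_split (CS1 (c :: x') (c :: y')) (CS1_finite _ _) c
      have hA : {z ∈ CS1 (c :: x') (c :: y') | z.head? = some c} = (c :: ·) '' CS1 x' y' := by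
        ext z
        constructor
        · rintro ⟨⟨h1, h2, h3⟩, hh⟩
          cases z with
          | nil => simp at hh
          | cons a z' =>
            simp only [List.head?_cons, Option.some.injEq] at hh
            subst hh
            exact ⟨z', ⟨List.cons_sublist_cons.mp h1, List.cons_sublist_cons.mp h2,
              by simpa using h3⟩, rfl⟩
        · rintro ⟨z', ⟨h1, h2, h3⟩, rfl⟩
          exact ⟨⟨List.cons_sublist_cons.mpr h1, List.cons_sublist_cons.mpr h2,
            by simpa using h3⟩, rfl⟩
      have hB : {z ∈ CS1 (c :: x') (c :: y') | z.head? ≠ some c} = ∅ := by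
        ext z
        simp only [Set.mem_setOf_eq, Set.mem_empty_iff_false, iff_false]
        rintro ⟨⟨h1, h2, h3⟩, hh⟩
        have hzx : z.Sublist x' := sublist_of_ne_head h1 hh
        have hzy : z.Sublist y' := sublist_of_ne_head h2 hh
        have hz : z = y' := hzy.eq_of_length_le (by simp at h3; omega)
        subst hz
        exact hyx (List.cons_sublist_cons.mpr hzx)
      rw [hA, hB] at hsplit
      rw [ncard_cons_image] at hsplit
      simp only [Set.ncard_empty, Nat.add_zero] at hsplit
      have hrec := ih y' (fun h => hyx (List.cons_sublist_cons.mpr h))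
      simp only [List.length_cons]
      omega
    · -- c ≠ b
      have hsplit := ncard_split (CS1 (c :: x') (b :: y')) (CS1_finite _ _) b
      -- part A : head = some b, included in CS1 x' y
      have hA : {z ∈ CS1 (c :: x') (b :: y') | z.head? = some b} ⊆ CS1 x' (b :: y') := by
        rintro z ⟨⟨h1, h2, h3⟩, hh⟩
        exact ⟨sublist_of_ne_head h1 (by rw [hh]; simp; exact fun h => hcb h.symm), h2, h3⟩
      -- part B : head ≠ some b, z = y'
      have hB : {z ∈ CS1 (c :: x') (b :: y') | z.head? ≠ some b} ⊆ {y'} := by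
        rintro z ⟨⟨h1, h2, h3⟩, hh⟩
        have hzy : z.Sublist y' := sublist_of_ne_head h2 hh
        exact hzy.eq_of_length_le (by simp at h3; omega)
      have hArec : (CS1 x' (b :: y')).ncard ≤ x'.length + 2 - (b :: y').length :=
        ih (b :: y') (fun h => hyx (h.trans (List.sublist_cons_self c x')))
      have hAcard := le_trans (Set.ncard_le_ncard hA (CS1_finite _ _)) hArec
      have hBcard := ncard_le_one_of_subset_singleton hB
      simp only [List.length_cons] at *
      omega

/-- W1 : when `|y| = |x| + 1`, common subsequences of length `|y| - 2 = |x| - 1`. -/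
lemma W1_lemma (x y : List Bool) (h : y.length = x.length + 1) :
    (CS2 x y).ncard ≤ x.length := by
  have hsub : CS2 x y ⊆ {z : List Bool | z.Sublist x ∧ z.length + 1 = x.length} := by
    rintro z ⟨h1, _, h3⟩
    exact ⟨h1, by omega⟩
  exact le_trans (Set.ncard_le_ncard hsub ((finite_sublists x).subset (fun _ hz => hz.1)))
    (ncard_D1 x)

lemma W0_lemma (x y : List Bool) (h : x.length + 2 ≤ y.length) :
    (CS2 x y).ncard ≤ 1 := by
  apply ncard_le_one_of_subset_singleton (w := x)
  rintro z ⟨h1, _, h3⟩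
  exact h1.eq_of_length_le (by omega)

/-- The U-lemma: subsequences of `w` of length `|w| - 1` whose head is `!b`. -/
lemma U_lemma (w : List Bool) (b : Bool) :
    {z : List Bool | z.Sublist w ∧ z.length + 1 = w.length ∧ z.head? = some (!b)}.ncard
      ≤ w.length - 1 := by
  rcases w with _ | ⟨d, w'⟩
  · have hemp : {z : List Bool | z.Sublist ([] : List Bool) ∧ z.length + 1 = ([] : List Bool).length
        ∧ z.head? = some (!b)} = ∅ := by
      ext z
      simp only [Set.mem_setOf_eq, Set.mem_empty_iff_false, iff_false]
      rintro ⟨_, h2, _⟩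
      simp at h2
    rw [hemp]
    simp
  by_cases hd : d = !b
  · subst hd
    have himg : {z : List Bool | z.Sublist ((!b) :: w') ∧ z.length + 1 = ((!b) :: w').length
        ∧ z.head? = some (!b)}
        = ((!b) :: ·) '' {z : List Bool | z.Sublist w' ∧ z.length + 1 = w'.length} := by
      ext z
      constructor
      · rintro ⟨h1, h2, h3⟩
        cases z with
        | nil => simp at h3
        | cons a z' =>
          simp only [List.head?_cons, Option.some.injEq] at h3
          subst h3
          exact ⟨z', ⟨List.cons_sublist_cons.mp h1, by simpa using h2⟩, rfl⟩
      · rintro ⟨z', ⟨h1, h2⟩, rfl⟩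
        exact ⟨List.cons_sublist_cons.mpr h1, by simpa using h2, rfl⟩
    rw [himg, ncard_cons_image]
    have := ncard_D1 w'
    simp only [List.length_cons]
    omega
  · -- d = b
    have hsub : {z : List Bool | z.Sublist (d :: w') ∧ z.length + 1 = (d :: w').length
        ∧ z.head? = some (!b)} ⊆ {w'} := by
      rintro z ⟨h1, h2, h3⟩
      have hzx : z.Sublist w' := sublist_of_ne_head h1
        (by rw [h3]; exact fun hc => hd (by injection hc with h; exact h.symm))
      exact hzx.eq_of_length_le (by simp at h2; omega)
    rcases w' with _ | ⟨e, w''⟩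
    · have hemp : {z : List Bool | z.Sublist [d] ∧ z.length + 1 = ([d] : List Bool).length
          ∧ z.head? = some (!b)} = ∅ := by
        ext z
        simp only [Set.mem_setOf_eq, Set.mem_empty_iff_false, iff_false]
        rintro ⟨h1, h2, h3⟩
        have := Set.mem_singleton_iff.mp (hsub ⟨h1, h2, h3⟩)
        subst this
        simp at h3
      rw [hemp]
      simp
    · calc {z : List Bool | z.Sublist (d :: e :: w'') ∧ z.length + 1 = (d :: e :: w'').length
            ∧ z.head? = some (!b)}.ncard ≤ 1 := ncard_le_one_of_subset_singleton hsub
        _ ≤ (d :: e :: w'').length - 1 := by simp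


/-! ### Base cases by decision procedure -/

lemma base7_aux : ∀ b1 b2 b3 b4 b5 : Bool,
    ((([b1,b2,b3,b4,b5] : List Bool).sublists.filter
      (fun z => z.length + 2 == 5)).toFinset).card ≤ 7 := by decide

lemma base6_aux : ∀ a1 a2 a3 a4 a5 b1 b2 b3 b4 b5 : Bool,
    [a1,a2,a3,a4,a5] ≠ [b1,b2,b3,b4,b5] →
    ((([b1,b2,b3,b4,b5] : List Bool).sublists.filter
      (fun z => z.length + 2 == 5 && decide (z.Sublist [a1,a2,a3,a4,a5]))).toFinset).card ≤ 6 := by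
  decide


lemma list5 (y : List Bool) (hy : y.length = 5) :
    ∃ b1 b2 b3 b4 b5 : Bool, y = [b1, b2, b3, b4, b5] := by
  rcases y with _|⟨b1, y⟩; · simp at hy
  rcases y with _|⟨b2, y⟩; · simp at hy
  rcases y with _|⟨b3, y⟩; · simp at hy
  rcases y with _|⟨b4, y⟩; · simp at hy
  rcases y with _|⟨b5, y⟩; · simp at hy
  rcases y with _|⟨b6, y⟩
  · exact ⟨b1, b2, b3, b4, b5, rfl⟩
  · simp at hy

lemma base7 (x y : List Bool) (hy : y.length = 5) : (CS2 x y).ncard ≤ 7 := by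
  obtain ⟨b1, b2, b3, b4, b5, rfl⟩ := list5 y hy
  set F := (([b1,b2,b3,b4,b5] : List Bool).sublists.filter
      (fun z => z.length + 2 == 5)).toFinset with hF
  have hsub : CS2 x [b1,b2,b3,b4,b5] ⊆ ↑F := by
    rintro z ⟨h1, h2, h3⟩
    rw [Finset.mem_coe, hF, List.mem_toFinset, List.mem_filter]
    refine ⟨List.mem_sublists.mpr h2, ?_⟩
    simp only [beq_iff_eq]
    simpa using h3
  calc (CS2 x [b1,b2,b3,b4,b5]).ncard ≤ (↑F : Set (List Bool)).ncard :=
      Set.ncard_le_ncard hsub (Finset.finite_toSet _)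
    _ = F.card := Set.ncard_coe_finset _
    _ ≤ 7 := base7_aux b1 b2 b3 b4 b5

lemma base6 (x y : List Bool) (hy : y.length = 5) (hx : x.length = 5) (hxy : x ≠ y) :
    (CS2 x y).ncard ≤ 6 := by
  obtain ⟨b1, b2, b3, b4, b5, rfl⟩ := list5 y hy
  obtain ⟨a1, a2, a3, a4, a5, rfl⟩ := list5 x hx
  set F := (([b1,b2,b3,b4,b5] : List Bool).sublists.filter
      (fun z => z.length + 2 == 5 && decide (z.Sublist [a1,a2,a3,a4,a5]))).toFinset with hF
  have hsub : CS2 [a1,a2,a3,a4,a5] [b1,b2,b3,b4,b5] ⊆ ↑F := by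
    rintro z ⟨h1, h2, h3⟩
    rw [Finset.mem_coe, hF, List.mem_toFinset, List.mem_filter]
    refine ⟨List.mem_sublists.mpr h2, ?_⟩
    simp only [Bool.and_eq_true, beq_iff_eq, decide_eq_true_eq]
    exact ⟨by simpa using h3, h1⟩
  calc (CS2 [a1,a2,a3,a4,a5] [b1,b2,b3,b4,b5]).ncard ≤ (↑F : Set (List Bool)).ncard :=
      Set.ncard_le_ncard hsub (Finset.finite_toSet _)
    _ = F.card := Set.ncard_coe_finset _
    _ ≤ 6 := base6_aux a1 a2 a3 a4 a5 b1 b2 b3 b4 b5 hxy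

/-! ### Subset lemmas for the head partition -/

/-- In the equal-heads case, non-`b`-headed common subsequences land in `CS1` of the tails. -/
lemma Bpart_CS1 {b : Bool} {xt yt : List Bool} :
    {z ∈ CS2 (b :: xt) (b :: yt) | z.head? ≠ some b} ⊆ CS1 xt yt := by
  rintro z ⟨⟨h1, h2, h3⟩, hh⟩
  exact ⟨sublist_of_ne_head h1 hh, sublist_of_ne_head h2 hh, by simp at h3; omega⟩

/-- In the distinct-heads case, non-`b`-headed common subsequences land in the `U` set of `yt`. -/
lemma Bpart_U {b : Bool} {x yt : List Bool} (hyt : 2 ≤ yt.length) :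
    {z ∈ CS2 x (b :: yt) | z.head? ≠ some b} ⊆
      {z : List Bool | z.Sublist yt ∧ z.length + 1 = yt.length ∧ z.head? = some (!b)} := by
  rintro z ⟨⟨h1, h2, h3⟩, hh⟩
  have hzy : z.Sublist yt := sublist_of_ne_head h2 hh
  have hlen : z.length + 1 = yt.length := by simp at h3; omega
  cases z with
  | nil => simp at hlen; omega
  | cons hz tz =>
    refine ⟨hzy, hlen, ?_⟩
    simp only [List.head?_cons, Option.some.injEq]
    simp only [List.head?_cons, ne_eq, Option.some.injEq] at hh
    cases hz <;> cases b <;> simp_all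

lemma Apart_sub {c b : Bool} {xt y : List Bool} (hcb : c ≠ b) :
    {z ∈ CS2 (c :: xt) y | z.head? = some b} ⊆ {z ∈ CS2 xt y | z.head? = some b} := by
  rintro z ⟨⟨h1, h2, h3⟩, hh⟩
  exact ⟨⟨sublist_of_ne_head h1 (by rw [hh]; exact fun hc => hcb (by injection hc with h; exact h.symm)),
    h2, h3⟩, hh⟩


lemma part_finite (x y : List Bool) (P : List Bool → Prop) :
    {z ∈ CS2 x y | P z}.Finite :=
  (CS2_finite x y).subset (fun _ h => h.1)

/-! ### The A-lemmas: counting `b`-headed common subsequences while scanning `x` -/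

lemma A_nil (y : List Bool) (b : Bool) :
    {z ∈ CS2 [] y | z.head? = some b}.ncard = 0 := by
  have : {z ∈ CS2 [] y | z.head? = some b} = ∅ := by
    ext z
    simp only [Set.mem_setOf_eq, Set.mem_empty_iff_false, iff_false]
    rintro ⟨⟨h1, _, _⟩, hh⟩
    rw [List.sublist_nil.mp h1] at hh
    simp at hh
  rw [this, Set.ncard_empty]

lemma A1_lemma (b : Bool) (yt : List Bool) :
    ∀ x', ¬ (b :: yt).Sublist x' → x'.length + 1 ≤ (b :: yt).length →
    3 ≤ (b :: yt).length →
    {z ∈ CS2 x' (b :: yt) | z.head? = some b}.ncard ≤ (b :: yt).length - 2 := by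
  intro x'
  induction x' with
  | nil => intro _ _ _; rw [A_nil]; omega
  | cons c xt ih =>
    intro hsub hlen h3
    by_cases hcb : c = b
    · subst hcb
      rw [headb_CS2 _ xt yt, ncard_cons_image]
      simp only [List.length_cons] at hlen h3 ⊢
      rcases Nat.lt_or_ge (xt.length + 1) yt.length with hc | hc
      · have := W0_lemma xt yt (by omega)
        omega
      · have hyt : yt.length = xt.length + 1 := by omega
        have := W1_lemma xt yt hyt
        omega
    · refine le_trans (Set.ncard_le_ncard (Apart_sub hcb) (part_finite _ _ _)) ?_
      exact ih (fun h => hsub (h.trans (List.sublist_cons_self c xt)))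
        (by simp at hlen ⊢; omega) h3

/-! ### W2 -/

lemma W2_lemma : ∀ q, 5 ≤ q → ∀ x y : List Bool, y.length = q → x.length = q →
    ¬ y.Sublist x → (CS2 x y).ncard ≤ 2 * q - 4 := by
  intro q hq
  induction q, hq using Nat.le_induction with
  | base =>
    intro x y hy hx hyx
    have := base6 x y hy hx (fun h => hyx (h ▸ List.Sublist.refl y))
    omega
  | succ q hq ih =>
    intro x y hy hx hyx
    rcases y with _ | ⟨b, yt⟩
    · simp at hy
    rcases x with _ | ⟨c, xt⟩
    · simp at hx
    have hyt : yt.length = q := by simpa using hy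
    have hxt : xt.length = q := by simpa using hx
    have hsplit := ncard_split (CS2 (c :: xt) (b :: yt)) (CS2_finite _ _) b
    by_cases hcb : c = b
    · subst hcb
      rw [headb_CS2 _ xt yt, ncard_cons_image] at hsplit
      have hsub' : ¬ yt.Sublist xt := fun h => hyx (List.cons_sublist_cons.mpr h)
      have hA := ih xt yt hyt hxt hsub'
      have hB := le_trans (Set.ncard_le_ncard (Bpart_CS1 (b := c) (xt := xt) (yt := yt)) (CS1_finite xt yt))
        (L_lemma xt yt hsub')
      omega
    · have hA : {z ∈ CS2 (c :: xt) (b :: yt) | z.head? = some b}.ncard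
          ≤ (b :: yt).length - 2 := by
        refine le_trans (Set.ncard_le_ncard (Apart_sub hcb) (part_finite _ _ _)) ?_
        exact A1_lemma b yt xt (fun h => hyx (h.trans (List.sublist_cons_self c xt)))
          (by simp; omega) (by simp; omega)
      have hB := le_trans
        (Set.ncard_le_ncard (Bpart_U (x := c :: xt) (b := b) (yt := yt) (by omega))
          ((finite_sublists yt).subset (fun _ h => h.1)))
        (U_lemma yt b)
      simp only [List.length_cons] at hA
      omega

/-! ### A2 -/

lemma A2_lemma (b : Bool) (yt : List Bool) (h6 : 6 ≤ (b :: yt).length) :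
    ∀ x', ¬ (b :: yt).Sublist x' → x'.length ≤ (b :: yt).length →
    {z ∈ CS2 x' (b :: yt) | z.head? = some b}.ncard ≤ 2 * (b :: yt).length - 6 := by
  intro x'
  induction x' with
  | nil => intro _ _; rw [A_nil]; omega
  | cons c xt ih =>
    intro hsub hlen
    by_cases hcb : c = b
    · subst hcb
      rw [headb_CS2 _ xt yt, ncard_cons_image]
      simp only [List.length_cons] at hlen h6 ⊢
      have hsub' : ¬ yt.Sublist xt := fun h => hsub (List.cons_sublist_cons.mpr h)
      rcases Nat.lt_or_ge (xt.length + 1) yt.length with hc | hc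
      · have := W0_lemma xt yt (by omega)
        omega
      · rcases Nat.lt_or_ge xt.length yt.length with hc2 | hc2
        · have hyt : yt.length = xt.length + 1 := by omega
          have := W1_lemma xt yt hyt
          omega
        · have hxy : xt.length = yt.length := by omega
          have := W2_lemma yt.length (by omega) xt yt rfl hxy hsub'
          omega
    · refine le_trans (Set.ncard_le_ncard (Apart_sub hcb) (part_finite _ _ _)) ?_
      exact ih (fun h => hsub (h.trans (List.sublist_cons_self c xt)))
        (by simp at hlen ⊢; omega)

/-! ### W3 -/

lemma W3_lemma : ∀ q, 5 ≤ q → ∀ x y : List Bool, y.length = q → x.length = q + 1 →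
    ¬ y.Sublist x → (CS2 x y).ncard ≤ 3 * q - 8 := by
  intro q hq
  induction q, hq using Nat.le_induction with
  | base =>
    intro x y hy hx hyx
    have := base7 x y hy
    omega
  | succ q hq ih =>
    intro x y hy hx hyx
    rcases y with _ | ⟨b, yt⟩
    · simp at hy
    rcases x with _ | ⟨c, xt⟩
    · simp at hx
    have hyt : yt.length = q := by simpa using hy
    have hxt : xt.length = q + 1 := by simpa using hx
    have hsplit := ncard_split (CS2 (c :: xt) (b :: yt)) (CS2_finite _ _) b
    by_cases hcb : c = b
    · subst hcb
      rw [headb_CS2 _ xt yt, ncard_cons_image] at hsplit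
      have hsub' : ¬ yt.Sublist xt := fun h => hyx (List.cons_sublist_cons.mpr h)
      have hA := ih xt yt hyt hxt hsub'
      have hB := le_trans (Set.ncard_le_ncard (Bpart_CS1 (b := c) (xt := xt) (yt := yt)) (CS1_finite xt yt))
        (L_lemma xt yt hsub')
      omega
    · have hA : {z ∈ CS2 (c :: xt) (b :: yt) | z.head? = some b}.ncard
          ≤ 2 * (b :: yt).length - 6 := by
        refine le_trans (Set.ncard_le_ncard (Apart_sub hcb) (part_finite _ _ _)) ?_
        exact A2_lemma b yt (by simp; omega) xt
          (fun h => hyx (h.trans (List.sublist_cons_self c xt)))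
          (by simp; omega)
      have hB := le_trans
        (Set.ncard_le_ncard (Bpart_U (x := c :: xt) (b := b) (yt := yt) (by omega))
          ((finite_sublists yt).subset (fun _ h => h.1)))
        (U_lemma yt b)
      simp only [List.length_cons] at hA
      omega

/-! ### A3 -/

lemma A3_lemma (b : Bool) (yt : List Bool) (h6 : 6 ≤ (b :: yt).length) :
    ∀ x', ¬ (b :: yt).Sublist x' → x'.length ≤ (b :: yt).length + 1 →
    {z ∈ CS2 x' (b :: yt) | z.head? = some b}.ncard ≤ 3 * (b :: yt).length - 11 := by
  intro x'
  induction x' with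
  | nil => intro _ _; rw [A_nil]; omega
  | cons c xt ih =>
    intro hsub hlen
    by_cases hcb : c = b
    · subst hcb
      rw [headb_CS2 _ xt yt, ncard_cons_image]
      simp only [List.length_cons] at hlen h6 ⊢
      have hsub' : ¬ yt.Sublist xt := fun h => hsub (List.cons_sublist_cons.mpr h)
      rcases Nat.lt_or_ge (xt.length + 1) yt.length with hc | hc
      · have := W0_lemma xt yt (by omega)
        omega
      · rcases Nat.lt_or_ge xt.length yt.length with hc2 | hc2
        · have hyt : yt.length = xt.length + 1 := by omega
          have := W1_lemma xt yt hyt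
          omega
        · rcases Nat.lt_or_ge xt.length (yt.length + 1) with hc3 | hc3
          · have hxy : xt.length = yt.length := by omega
            have := W2_lemma yt.length (by omega) xt yt rfl hxy hsub'
            omega
          · have hxy : xt.length = yt.length + 1 := by omega
            have := W3_lemma yt.length (by omega) xt yt rfl hxy hsub'
            omega
    · refine le_trans (Set.ncard_le_ncard (Apart_sub hcb) (part_finite _ _ _)) ?_
      exact ih (fun h => hsub (h.trans (List.sublist_cons_self c xt)))
        (by simp at hlen ⊢; omega)

/-! ### W4 -/

lemma W4_lemma : ∀ q, 5 ≤ q → ∀ x y : List Bool, y.length = q → x.length = q + 2 →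
    ¬ y.Sublist x → (CS2 x y).ncard ≤ 4 * q - 13 := by
  intro q hq
  induction q, hq using Nat.le_induction with
  | base =>
    intro x y hy hx hyx
    have := base7 x y hy
    omega
  | succ q hq ih =>
    intro x y hy hx hyx
    rcases y with _ | ⟨b, yt⟩
    · simp at hy
    rcases x with _ | ⟨c, xt⟩
    · simp at hx
    have hyt : yt.length = q := by simpa using hy
    have hxt : xt.length = q + 2 := by simpa using hx
    have hsplit := ncard_split (CS2 (c :: xt) (b :: yt)) (CS2_finite _ _) b
    by_cases hcb : c = b
    · subst hcb
      rw [headb_CS2 _ xt yt, ncard_cons_image] at hsplit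
      have hsub' : ¬ yt.Sublist xt := fun h => hyx (List.cons_sublist_cons.mpr h)
      have hA := ih xt yt hyt hxt hsub'
      have hB := le_trans (Set.ncard_le_ncard (Bpart_CS1 (b := c) (xt := xt) (yt := yt)) (CS1_finite xt yt))
        (L_lemma xt yt hsub')
      omega
    · have hA : {z ∈ CS2 (c :: xt) (b :: yt) | z.head? = some b}.ncard
          ≤ 3 * (b :: yt).length - 11 := by
        refine le_trans (Set.ncard_le_ncard (Apart_sub hcb) (part_finite _ _ _)) ?_
        exact A3_lemma b yt (by simp; omega) xt
          (fun h => hyx (h.trans (List.sublist_cons_self c xt)))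
          (by simp; omega)
      have hB := le_trans
        (Set.ncard_le_ncard (Bpart_U (x := c :: xt) (b := b) (yt := yt) (by omega))
          ((finite_sublists yt).subset (fun _ h => h.1)))
        (U_lemma yt b)
      simp only [List.length_cons] at hA
      omega

end S11

/-- If `|x| = |y| + 2 = m + 2`, `y ∉ D_2(x)` and `m ≥ 5`, then
the intersection of `D_4(x)` and `D_2(y)` has size at most `4m - 13`. -/
theorem stmt11 (x y : List Bool) (m : ℕ) (hm : y.length = m) (h5 : 5 ≤ m)
    (h : x.length = y.length + 2) (hy : y ∉ delBall 2 x) :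
    (delBall 4 x ∩ delBall 2 y).ncard ≤ 4 * m - 13 := by
  have hyx : ¬ y.Sublist x := fun hs => hy ⟨hs, by omega⟩
  have hset : delBall 4 x ∩ delBall 2 y = S11.CS2 x y := by
    ext z
    simp only [delBall, S11.CS2, Set.mem_inter_iff, Set.mem_setOf_eq]
    constructor
    · rintro ⟨⟨h1, h2⟩, h3, h4⟩
      exact ⟨h1, h3, h4⟩
    · rintro ⟨h1, h3, h4⟩
      exact ⟨⟨h1, by omega⟩, h3, h4⟩
  rw [hset]
  exact S11.W4_lemma m h5 x y hm (by omega) hyx
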